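/- arXiv:1709.07609 — 2 statements merged into one kernel-verified Lean document; each statement's English description precedes it below -/
import Mathlib

section
/- For every real number x > 1 the following two series identities hold: Σ_{r=1}^∞ x^{1−2r}/(2r(2r−1)) = (1/2)·[ x·log(1 − x^{−2}) + log((1 + x^{−1})/(1 − x^{−1})) ], and Σ_{r=2}^∞ x^{2−2r}/((2r−1)(2r−2)) = 1 − (1/2)·[ log(1 − x^{−2}) + x·log((1 + x^{−1})/(1 − x^{−1})) ]. -/
open Real

/-- **Lemma 3.5, closed forms of `f₁` and `f₂`.**  For `x > 1`,
`Σ_{r≥1} x^{1−2r}/(2r(2r−1)) = (1/2)[x·log(1−x⁻²) + log((1+x⁻¹)/(1−x⁻¹))]` and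
`Σ_{r≥2} x^{2−2r}/((2r−1)(2r−2)) = 1 − (1/2)[log(1−x⁻²) + x·log((1+x⁻¹)/(1−x⁻¹))]`. -/
theorem f1_f2_closed_form (x : ℝ) (hx : 1 < x) :
    (∑' r : ℕ, x ^ (1 - 2 * ((r : ℤ) + 1)) /
        ((2 * ((r : ℝ) + 1)) * (2 * ((r : ℝ) + 1) - 1)) =
      (1 / 2) * (x * Real.log (1 - (x ^ 2)⁻¹) +
        Real.log ((1 + x⁻¹) / (1 - x⁻¹)))) ∧
    (∑' r : ℕ, x ^ (2 - 2 * ((r : ℤ) + 2)) /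
        ((2 * ((r : ℝ) + 2) - 1) * (2 * ((r : ℝ) + 2) - 2)) =
      1 - (1 / 2) * (Real.log (1 - (x ^ 2)⁻¹) +
        x * Real.log ((1 + x⁻¹) / (1 - x⁻¹)))) := by
  have hx0 : (0:ℝ) < x := lt_trans one_pos hx
  set y : ℝ := x⁻¹ with hy_def
  have hy0 : 0 < y := inv_pos.2 hx0
  have hy1 : y < 1 := by rw [hy_def]; exact inv_lt_one_of_one_lt₀ hx
  have hxy : x * y = 1 := mul_inv_cancel₀ hx0.ne'
  have hxy' : x = y⁻¹ := by rw [hy_def, inv_inv]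
  have hyabs : |y| < 1 := by rw [abs_of_pos hy0]; exact hy1
  have hy2abs : |y ^ 2| < 1 := by
    rw [abs_of_pos (pow_pos hy0 2)]; nlinarith
  have h1p : (0:ℝ) < 1 + y := by linarith
  have h1m : (0:ℝ) < 1 - y := by linarith
  have hinv : (x ^ 2)⁻¹ = y ^ 2 := by rw [hy_def, inv_pow]
  -- basic power series
  have h2 : HasSum (fun n : ℕ => (y ^ 2) ^ (n + 1) / (n + 1)) (-log (1 - y ^ 2)) :=
    Real.hasSum_pow_div_log_of_abs_lt_one hy2abs
  have h3 : HasSum (fun k : ℕ => (2 : ℝ) * (1 / (2 * k + 1)) * y ^ (2 * k + 1))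
      (log (1 + y) - log (1 - y)) := Real.hasSum_log_sub_log_of_abs_lt_one hyabs
  set S : ℝ := (log (1 + y) - log (1 - y)) / 2 with hS
  have hA : HasSum (fun k : ℕ => y ^ (2 * k + 1) / (2 * (k:ℝ) + 1)) S := by
    have h := h3.mul_left (1 / 2)
    have hf : (fun k : ℕ => (1/2 : ℝ) * ((2 : ℝ) * (1 / (2 * k + 1)) * y ^ (2 * k + 1)))
        = fun k : ℕ => y ^ (2 * k + 1) / (2 * (k:ℝ) + 1) := by
      funext k
      have hne : (2 * (k:ℝ) + 1) ≠ 0 := by positivity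
      field_simp
    rw [hf] at h
    have hv : S = (1/2 : ℝ) * (log (1 + y) - log (1 - y)) := by rw [hS]; ring
    rw [hv]; exact h
  have hB : HasSum (fun r : ℕ => y ^ (2 * r + 1) / (2 * (r:ℝ) + 2))
      ((x / 2) * -log (1 - y ^ 2)) := by
    have h := h2.mul_left (x / 2)
    have hf : (fun n : ℕ => (x/2) * ((y ^ 2) ^ (n + 1) / ((n:ℝ) + 1)))
        = fun r : ℕ => y ^ (2 * r + 1) / (2 * (r:ℝ) + 2) := by
      funext r
      have hne : ((r:ℝ) + 1) ≠ 0 := by positivity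
      have hp : (y ^ 2) ^ (r + 1) = y * y ^ (2 * r + 1) := by
        rw [← pow_mul, show 2 * (r + 1) = (2 * r + 1) + 1 by ring, pow_succ]; ring
      rw [hp, hxy']
      field_simp
    rw [hf] at h; exact h
  have hC : HasSum (fun r : ℕ => y ^ (2 * r + 2) / (2 * (r:ℝ) + 2))
      (-(1/2) * log (1 - y ^ 2)) := by
    have h := h2.mul_left (1 / 2)
    have hf : (fun n : ℕ => (1/2 : ℝ) * ((y ^ 2) ^ (n + 1) / ((n:ℝ) + 1)))
        = fun r : ℕ => y ^ (2 * r + 2) / (2 * (r:ℝ) + 2) := by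
      funext r
      have hne : ((r:ℝ) + 1) ≠ 0 := by positivity
      have hp : (y ^ 2) ^ (r + 1) = y ^ (2 * r + 2) := by
        rw [← pow_mul]; ring_nf
      rw [hp]
      field_simp
    rw [hf] at h
    rw [show -(1/2:ℝ) * log (1 - y ^ 2) = 1/2 * -log (1 - y ^ 2) by ring]; exact h
  have hA' : HasSum (fun n : ℕ => y ^ (2 * (n + 1) + 1) / (2 * ((n:ℝ) + 1) + 1))
      (S - y) := by
    have h := (hasSum_nat_add_iff' (f := fun k : ℕ => y ^ (2 * k + 1) / (2 * (k:ℝ) + 1)) 1).mpr hA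
    simp only [Finset.range_one, Finset.sum_singleton, Nat.cast_zero] at h
    norm_num at h
    convert h using 2 with n
  have hD : HasSum (fun r : ℕ => y ^ (2 * r + 2) / (2 * (r:ℝ) + 3)) (x * S - 1) := by
    have h := hA'.mul_left x
    have hf : (fun n : ℕ => x * (y ^ (2 * (n + 1) + 1) / (2 * ((n:ℝ) + 1) + 1)))
        = fun r : ℕ => y ^ (2 * r + 2) / (2 * (r:ℝ) + 3) := by
      funext r
      have hne : (2 * (r:ℝ) + 3) ≠ 0 := by positivity
      have hp : y ^ (2 * (r + 1) + 1) = y * y ^ (2 * r + 2) := by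
        rw [show 2 * (r + 1) + 1 = (2 * r + 2) + 1 by ring, pow_succ]; ring
      rw [hp, hxy']
      have h23 : 2 * ((r:ℝ) + 1) + 1 = 2 * (r:ℝ) + 3 := by ring
      rw [h23]
      field_simp
    rw [hf] at h
    have hv : x * (S - y) = x * S - 1 := by
      rw [mul_sub, hxy]
    rw [← hv]; exact h
  constructor
  · -- first series
    have hsum := hA.sub hB
    have hf : (fun r : ℕ => y ^ (2 * r + 1) / (2 * (r:ℝ) + 1) - y ^ (2 * r + 1) / (2 * (r:ℝ) + 2))
        = fun r : ℕ => x ^ (1 - 2 * ((r : ℤ) + 1)) /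
            ((2 * ((r : ℝ) + 1)) * (2 * ((r : ℝ) + 1) - 1)) := by
      funext r
      have hz : x ^ (1 - 2 * ((r:ℤ) + 1)) = y ^ (2 * r + 1) := by
        rw [show (1 - 2 * ((r:ℤ) + 1)) = -((2 * r + 1 : ℕ) : ℤ) by push_cast; ring,
          zpow_neg, zpow_natCast, hy_def, inv_pow]
      rw [hz]
      have h1 : (2 * (r:ℝ) + 1) ≠ 0 := by positivity
      have h2' : (2 * (r:ℝ) + 2) ≠ 0 := by positivity
      have h3' : (2 * ((r:ℝ) + 1)) ≠ 0 := by positivity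
      have h4 : (2 * ((r:ℝ) + 1) - 1) ≠ 0 := by
        have hr : (0:ℝ) ≤ (r:ℝ) := r.cast_nonneg
        intro hc; nlinarith
      field_simp
      ring
    rw [hf] at hsum
    rw [hsum.tsum_eq, hinv, Real.log_div h1p.ne' h1m.ne', hS]
    ring
  · -- second series
    have hsum := hC.sub hD
    have hf : (fun r : ℕ => y ^ (2 * r + 2) / (2 * (r:ℝ) + 2) - y ^ (2 * r + 2) / (2 * (r:ℝ) + 3))
        = fun r : ℕ => x ^ (2 - 2 * ((r : ℤ) + 2)) /
            ((2 * ((r : ℝ) + 2) - 1) * (2 * ((r : ℝ) + 2) - 2)) := by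
      funext r
      have hz : x ^ (2 - 2 * ((r:ℤ) + 2)) = y ^ (2 * r + 2) := by
        rw [show (2 - 2 * ((r:ℤ) + 2)) = -((2 * r + 2 : ℕ) : ℤ) by push_cast; ring,
          zpow_neg, zpow_natCast, hy_def, inv_pow]
      rw [hz]
      have h1 : (2 * (r:ℝ) + 2) ≠ 0 := by positivity
      have h2' : (2 * (r:ℝ) + 3) ≠ 0 := by positivity
      have hr : (0:ℝ) ≤ (r:ℝ) := r.cast_nonneg
      have h3' : (2 * ((r:ℝ) + 2) - 1) ≠ 0 := by intro hc; nlinarith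
      have h4 : (2 * ((r:ℝ) + 2) - 2) ≠ 0 := by intro hc; nlinarith
      rw [div_sub_div _ _ h1 h2', div_eq_div_iff (mul_ne_zero h1 h2') (mul_ne_zero h3' h4)]
      ring
    rw [hf] at hsum
    rw [hsum.tsum_eq, hinv, Real.log_div h1p.ne' h1m.ne', hS]
    ring
end

section
/- Let L be a number field. For every integer ℓ ≥ 1 and every rational prime p one has Σ_{r=1}^{n_L} Λ̃_L(p^{ℓ·n_L + r}) ≥ n_L·log p. -/
open NumberField Ideal
open scoped Classical

noncomputable section

lemma count_multiples_ge (A n f : ℕ) (hf : 0 < f) :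
    n / f ≤ ((Finset.Icc 1 n).filter (fun r => f ∣ A + r)).card := by
  rw [← Finset.card_range (n / f)]
  have hA : A < (A / f + 1) * f := by
    have := Nat.div_add_mod A f
    have := Nat.mod_lt A hf
    nlinarith [Nat.div_add_mod A f]
  have hnf : (n / f) * f ≤ n := Nat.div_mul_le_self n f
  apply Finset.card_le_card_of_injOn (fun j => (A / f + 1 + j) * f - A)
  · intro j hj
    simp only [Finset.mem_coe, Finset.mem_range] at hj
    have e1 : A < (A / f + 1 + j) * f :=
      lt_of_lt_of_le hA (Nat.mul_le_mul_right f (by omega))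
    have e2 : (A / f + 1 + j) * f ≤ A + n := by
      have hAf : (A / f) * f ≤ A := Nat.div_mul_le_self A f
      have h3 : (A / f + 1 + j) * f = (A / f) * f + (1 + j) * f := by ring
      have h4 : (1 + j) * f ≤ (n / f) * f := Nat.mul_le_mul_right f (by omega)
      omega
    have hc : (A / f + 1 + j) * f = f * (A / f + 1 + j) := Nat.mul_comm _ _
    simp only [Finset.mem_coe, Finset.mem_filter, Finset.mem_Icc]
    refine ⟨⟨by omega, by omega⟩, ⟨A / f + 1 + j, by omega⟩⟩
  · intro j1 h1 j2 h2 he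
    simp only [Finset.coe_range, Set.mem_Iio] at h1 h2
    simp only at he
    have e1 : A < (A / f + 1 + j1) * f :=
      lt_of_lt_of_le hA (Nat.mul_le_mul_right f (by omega))
    have e2 : A < (A / f + 1 + j2) * f :=
      lt_of_lt_of_le hA (Nat.mul_le_mul_right f (by omega))
    have heq : (A / f + 1 + j1) * f = (A / f + 1 + j2) * f := by omega
    have := Nat.eq_of_mul_eq_mul_right hf heq
    omega



set_option maxHeartbeats 1000000 in
/-- **Lemma 3.8.**  For every `ℓ ≥ 1` and prime `p`,
`Σ_{r=1}^{n_L} Λ̃_L(p^{ℓ·n_L + r}) ≥ n_L·log p`, where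
`Λ̃_L(n) = Σ_{N(I) = n} Λ_L(I)`. -/
theorem sum_tilde_vonMangoldt_ge
    (L : Type) [Field L] [NumberField L]
    (Λ : Ideal (𝓞 L) → ℝ)
    (hΛ₁ : ∀ (P : Ideal (𝓞 L)) (m : ℕ), P.IsPrime → P ≠ ⊥ → 1 ≤ m →
      Λ (P ^ m) = Real.log (Ideal.absNorm P))
    (hΛ₂ : ∀ I : Ideal (𝓞 L),
      (¬ ∃ (P : Ideal (𝓞 L)) (m : ℕ), P.IsPrime ∧ P ≠ ⊥ ∧ 1 ≤ m ∧ I = P ^ m) → Λ I = 0)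
    (ℓ : ℕ) (hℓ : 1 ≤ ℓ) (p : ℕ) (hp : p.Prime) :
    (Module.finrank ℚ L : ℝ) * Real.log p ≤
      ∑ r ∈ Finset.Icc 1 (Module.finrank ℚ L),
        ∑' I : Ideal (𝓞 L),
          if Ideal.absNorm I = p ^ (ℓ * Module.finrank ℚ L + r) then Λ I else 0 := by
  set n := Module.finrank ℚ L with hn
  have hn1 : 1 ≤ n := Module.finrank_pos
  -- the ideal generated by p and its norm
  set J : Ideal (𝓞 L) := Ideal.span {(p : 𝓞 L)} with hJdef
  have hpne : ((p : ℕ) : 𝓞 L) ≠ 0 := by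
    exact_mod_cast Nat.cast_ne_zero.mpr hp.ne_zero
  have hJbot : J ≠ ⊥ := by
    simpa [hJdef, Ideal.span_singleton_eq_bot] using hpne
  have hNormJ : Ideal.absNorm J = p ^ n := by
    rw [hJdef, Ideal.absNorm_span_singleton]
    have h1 : ((p : ℕ) : 𝓞 L) = algebraMap ℤ (𝓞 L) ((p : ℕ) : ℤ) := by
      simp
    rw [h1, Algebra.norm_algebraMap_of_basis (Module.Free.chooseBasis ℤ (𝓞 L))]
    rw [← Module.finrank_eq_card_chooseBasisIndex, RingOfIntegers.rank]
    simp [Int.natAbs_pow]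
    rfl
  -- factorization
  set s := UniqueFactorizationMonoid.normalizedFactors J with hs
  have hprod : s.prod = J := Ideal.prod_normalizedFactors_eq_self hJbot
  set fdeg : Ideal (𝓞 L) → ℕ := fun P => (Ideal.absNorm P).factorization p with hfdeg
  have hfd : ∀ P ∈ s, Ideal.absNorm P = p ^ fdeg P ∧ 1 ≤ fdeg P ∧ fdeg P ≤ n ∧
      P.IsPrime ∧ P ≠ ⊥ := by
    intro P hP
    have hPrime : Prime P := UniqueFactorizationMonoid.prime_of_normalized_factor P hP
    have hPbot : P ≠ ⊥ := hPrime.ne_zero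
    have hPp : P.IsPrime := Ideal.isPrime_of_prime hPrime
    have hdvd : Ideal.absNorm P ∣ p ^ n := by
      rw [← hNormJ]
      exact map_dvd Ideal.absNorm (UniqueFactorizationMonoid.dvd_of_mem_normalizedFactors hP)
    obtain ⟨i, hi, hNi⟩ := (Nat.dvd_prime_pow hp).mp hdvd
    have hfi : fdeg P = i := by
      rw [hfdeg]
      simp [hNi, Nat.Prime.factorization_pow hp]
    have hi1 : 1 ≤ i := by
      by_contra h
      have : i = 0 := by omega
      rw [this, pow_zero] at hNi
      exact hPp.ne_top (Ideal.absNorm_eq_one_iff.mp hNi)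
    exact ⟨by rw [hfi]; exact hNi, by omega, by omega, hPp, hPbot⟩
  have hsumf : (s.map fdeg).sum = n := by
    have h1 : (s.map (fun P => p ^ fdeg P)).prod = p ^ (s.map fdeg).sum := by
      induction s using Multiset.induction with
      | empty => simp
      | cons a t ih => simp [ih, pow_add, mul_comm]
    have h2 : (s.map Ideal.absNorm).prod = p ^ n := by
      rw [← map_multiset_prod Ideal.absNorm, hprod, hNormJ]
    have h3 : s.map Ideal.absNorm = s.map (fun P => p ^ fdeg P) :=
      Multiset.map_congr rfl (fun P hP => (hfd P hP).1)
    have h4 : p ^ (s.map fdeg).sum = p ^ n := by rw [← h1, ← h3, h2]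
    exact Nat.pow_right_injective hp.two_le h4
  set T := s.toFinset with hT
  set c : Ideal (𝓞 L) → ℕ :=
    fun P => ((Finset.Icc 1 n).filter (fun r => fdeg P ∣ ℓ * n + r)).card with hc
  -- combinatorial key inequality
  have hkey : n ≤ ∑ P ∈ T, c P * fdeg P := by
    have hforall : ∀ P ∈ T, n / fdeg P ≤ c P := by
      intro P hP
      have := hfd P (Multiset.mem_toFinset.mp hP)
      exact count_multiples_ge (ℓ * n) n (fdeg P) (by omega)
    by_cases hT1 : T.card = 1
    · obtain ⟨P, hP⟩ := Finset.card_eq_one.mp hT1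
      have hPs : P ∈ s := by
        rw [← Multiset.mem_toFinset, ← hT, hP]; exact Finset.mem_singleton_self P
      obtain ⟨_, hf1, _, _, _⟩ := hfd P hPs
      have hrep : s = Multiset.replicate (Multiset.card s) P := by
        rw [Multiset.eq_replicate_card]
        intro b hb
        have : b ∈ T := Multiset.mem_toFinset.mpr hb
        rw [hP, Finset.mem_singleton] at this
        exact this
      have hmul : Multiset.card s * fdeg P = n := by
        rw [← hsumf]
        conv_rhs => rw [hrep]
        simp [Multiset.map_replicate, Multiset.sum_replicate]
      have hdvdn : fdeg P ∣ n := Dvd.intro_left _ hmul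
      have : n / fdeg P * fdeg P = n := Nat.div_mul_cancel hdvdn
      rw [hP, Finset.sum_singleton]
      calc n = n / fdeg P * fdeg P := this.symm
        _ ≤ c P * fdeg P := Nat.mul_le_mul_right _ (hforall P (hP ▸ Finset.mem_singleton_self P))
    · -- at least two primes
      have hTne : T.Nonempty := by
        rw [hT, Multiset.toFinset_nonempty]
        intro h0
        rw [h0] at hsumf
        simp at hsumf
        omega
      have hT2 : 2 ≤ T.card := by
        have := Finset.card_pos.mpr hTne
        omega
      have hsumT : ∑ P ∈ T, fdeg P ≤ n := by
        rw [← hsumf, Finset.sum_multiset_map_count]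
        apply Finset.sum_le_sum
        intro P hP
        have h1 : 1 ≤ s.count P :=
          Multiset.one_le_count_iff_mem.mpr (Multiset.mem_toFinset.mp hP)
        rw [smul_eq_mul]
        calc fdeg P = 1 * fdeg P := (one_mul _).symm
          _ ≤ s.count P * fdeg P := Nat.mul_le_mul_right _ h1
      have hper : ∀ P ∈ T, n + 1 ≤ c P * fdeg P + fdeg P := by
        intro P hP
        obtain ⟨_, hf1, _, _, _⟩ := hfd P (Multiset.mem_toFinset.mp hP)
        have h1 : n < n / fdeg P * fdeg P + fdeg P := by
          have := Nat.div_add_mod n (fdeg P)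
          have := Nat.mod_lt n (show 0 < fdeg P by omega)
          have hcm : n / fdeg P * fdeg P = fdeg P * (n / fdeg P) := Nat.mul_comm _ _
          omega
        have h2 : n / fdeg P * fdeg P ≤ c P * fdeg P :=
          Nat.mul_le_mul_right _ (hforall P hP)
        omega
      have hsum2 : T.card * (n + 1) ≤ ∑ P ∈ T, (c P * fdeg P + fdeg P) := by
        calc T.card * (n + 1) = ∑ _P ∈ T, (n + 1) := by rw [Finset.sum_const, smul_eq_mul]
          _ ≤ _ := Finset.sum_le_sum hper
      rw [Finset.sum_add_distrib] at hsum2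
      have : 2 * (n + 1) ≤ T.card * (n + 1) := Nat.mul_le_mul_right _ hT2
      omega
  -- analytic side
  have hlogp : 0 ≤ Real.log p := Real.log_nonneg (by exact_mod_cast hp.one_lt.le)
  have hΛnn : ∀ I : Ideal (𝓞 L), 0 ≤ Λ I := by
    intro I
    by_cases h : ∃ (P : Ideal (𝓞 L)) (m : ℕ), P.IsPrime ∧ P ≠ ⊥ ∧ 1 ≤ m ∧ I = P ^ m
    · obtain ⟨P, m, hPp, hPb, hm, hI⟩ := h
      rw [hI, hΛ₁ P m hPp hPb hm]
      apply Real.log_nonneg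
      have : Ideal.absNorm P ≠ 0 := by
        rw [Ne, Ideal.absNorm_eq_zero_iff]; exact hPb
      exact_mod_cast Nat.one_le_iff_ne_zero.mpr this
    · rw [hΛ₂ I h]
  -- per-r lower bound
  have hstep : ∀ r ∈ Finset.Icc 1 n,
      ∑ P ∈ T.filter (fun P => fdeg P ∣ ℓ * n + r), (fdeg P : ℝ) * Real.log p ≤
        ∑' I : Ideal (𝓞 L), if Ideal.absNorm I = p ^ (ℓ * n + r) then Λ I else 0 := by
    intro r hr
    rw [Finset.mem_Icc] at hr
    set k := ℓ * n + r with hk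
    have hnk : n ≤ k := by
      have h := Nat.le_mul_of_pos_left n (show 0 < ℓ by omega)
      omega
    set g : Ideal (𝓞 L) → ℝ := fun I => if Ideal.absNorm I = p ^ k then Λ I else 0 with hg
    have hg0 : ∀ I, 0 ≤ g I := by
      intro I; rw [hg]; dsimp only; split
      · exact hΛnn I
      · exact le_refl 0
    have hgsum : Summable g := by
      apply summable_of_finite_support
      apply Set.Finite.subset (Ideal.finite_setOf_absNorm_eq (S := 𝓞 L) (p ^ k))
      intro I hI
      simp only [Function.mem_support, hg] at hI
      by_contra h
      exact hI (if_neg h)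
    -- facts about members of the filter
    have hmem : ∀ P ∈ T.filter (fun P => fdeg P ∣ k),
        g (P ^ (k / fdeg P)) = (fdeg P : ℝ) * Real.log p := by
      intro P hP
      rw [Finset.mem_filter] at hP
      obtain ⟨hN, hf1, hfn, hPp, hPb⟩ := hfd P (Multiset.mem_toFinset.mp hP.1)
      have hdk : fdeg P ∣ k := hP.2
      have hfk : fdeg P ≤ k := by omega
      have hm1 : 1 ≤ k / fdeg P := (Nat.one_le_div_iff (by omega)).mpr hfk
      have hNpow : Ideal.absNorm (P ^ (k / fdeg P)) = p ^ k := by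
        rw [map_pow, hN, ← pow_mul, Nat.mul_div_cancel' hdk]
      rw [hg]; dsimp only
      rw [if_pos hNpow, hΛ₁ P (k / fdeg P) hPp hPb hm1, hN]
      push_cast
      rw [Real.log_pow]
    -- injectivity of P ↦ P ^ (k / fdeg P) on the filter
    have hinj : Set.InjOn (fun P => P ^ (k / fdeg P))
        ↑(T.filter (fun P => fdeg P ∣ k)) := by
      intro P hP Q hQ he
      simp only [Finset.coe_filter, Set.mem_setOf_eq] at hP hQ
      obtain ⟨_, hf1P, hfnP, hPp, hPb⟩ := hfd P (Multiset.mem_toFinset.mp hP.1)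
      obtain ⟨_, hf1Q, hfnQ, hQp, hQb⟩ := hfd Q (Multiset.mem_toFinset.mp hQ.1)
      have hkP : k / fdeg P ≠ 0 := by
        have := (Nat.one_le_div_iff (show 0 < fdeg P by omega)).mpr (by omega : fdeg P ≤ k)
        omega
      have hkQ : k / fdeg Q ≠ 0 := by
        have := (Nat.one_le_div_iff (show 0 < fdeg Q by omega)).mpr (by omega : fdeg Q ≤ k)
        omega
      simp only at he
      have h1 : Q ^ (k / fdeg Q) ≤ P := by
        rw [← he]; exact Ideal.pow_le_self hkP
      have h2 : P ^ (k / fdeg P) ≤ Q := by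
        rw [he]; exact Ideal.pow_le_self hkQ
      exact le_antisymm (hQp.le_of_pow_le h2) (hPp.le_of_pow_le h1)
    calc ∑ P ∈ T.filter (fun P => fdeg P ∣ k), (fdeg P : ℝ) * Real.log p
        = ∑ I ∈ (T.filter (fun P => fdeg P ∣ k)).image (fun P => P ^ (k / fdeg P)), g I := by
          rw [Finset.sum_image (fun x hx y hy => hinj hx hy)]
          exact (Finset.sum_congr rfl hmem).symm
      _ ≤ ∑' I, g I := Summable.sum_le_tsum _ (fun I _ => hg0 I) hgsum
  -- put everything together
  calc (n : ℝ) * Real.log p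
      ≤ (∑ P ∈ T, c P * fdeg P : ℕ) * Real.log p := by
        apply mul_le_mul_of_nonneg_right _ hlogp
        exact_mod_cast hkey
    _ = ∑ P ∈ T, (c P : ℝ) * ((fdeg P : ℝ) * Real.log p) := by
        push_cast [Finset.sum_mul]
        apply Finset.sum_congr rfl
        intro P _; ring
    _ = ∑ P ∈ T, ∑ r ∈ Finset.Icc 1 n,
          (if fdeg P ∣ ℓ * n + r then (fdeg P : ℝ) * Real.log p else 0) := by
        apply Finset.sum_congr rfl
        intro P _
        rw [← Finset.sum_filter, Finset.sum_const, hc]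
        simp [nsmul_eq_mul]
    _ = ∑ r ∈ Finset.Icc 1 n, ∑ P ∈ T,
          (if fdeg P ∣ ℓ * n + r then (fdeg P : ℝ) * Real.log p else 0) := Finset.sum_comm
    _ ≤ _ := by
        apply Finset.sum_le_sum
        intro r hr
        rw [← Finset.sum_filter]
        exact hstep r hr
end
end
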